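/- arXiv:2202.06394 — 2 statements merged into one kernel-verified Lean document; each statement's English description precedes it below -/
import Mathlib

section
/- For the reflection I : Cat → Preord, a functor f : A → B is stably vertical (every pullback of f along any functor in Cat is vertical, i.e., sent to an isomorphism by I) if and only if f is bijective on objects and full (for every pair of objects a, a' of A, the map Hom_A(a,a') → Hom_B(f a, f a') is surjective). -/
open CategoryTheory
universe u

/-- The objects of a small category, regarded as carrying the reflected preorder. -/
def PreOb (A : Cat.{u, u}) : Type u := A

instance instPreObPreorder (A : Cat.{u, u}) : Preorder (PreOb A) where
  le x y := Nonempty ((show ↑A from x) ⟶ (show ↑A from y))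
  le_refl x := ⟨𝟙 _⟩
  le_trans _ _ _ h h' := ⟨h.some ≫ h'.some⟩

/-- The reflection `I : Cat → Preord` on objects (regarded as landing in `Cat`). -/
def ICat (A : Cat.{u, u}) : Cat.{u, u} := Cat.of (PreOb A)

instance (A : Cat.{u, u}) : Preorder ↑(ICat A) := instPreObPreorder A

/-- In the reflected preorder, a morphism of `A` witnesses an inequality. -/
def toLe {A : Cat.{u, u}} {x y : ↑A} (g : x ⟶ y) :
    (show PreOb A from x) ≤ (show PreOb A from y) := ⟨g⟩

/-- The unit of the reflection `Cat → Preord`. -/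
def etaF (A : Cat.{u, u}) : A ⟶ ICat A where
  toFunctor := {
    obj x := (show PreOb A from x)
    map {_x _y} g := homOfLE (toLe g)
    map_id _ := rfl
    map_comp _ _ := rfl }

/-- The reflection `I : Cat → Preord` on morphisms. -/
def IFun {A B : Cat.{u, u}} (f : A ⟶ B) : ICat A ⟶ ICat B where
  toFunctor := {
    obj x := (show PreOb B from f.toFunctor.obj (show ↑A from x))
    map {_x _y} g := homOfLE (Nonempty.map (fun h => f.toFunctor.map h) (leOfHom g))
    map_id _ := rfl
    map_comp _ _ := rfl }

/-- `f` is stably vertical: every pullback of `f` is inverted by the reflection `I`. -/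
def StablyVertical {A B : Cat.{u, u}} (f : A ⟶ B) : Prop :=
  ∀ (C P : Cat.{u, u}) (g : C ⟶ B) (π₁ : P ⟶ C) (π₂ : P ⟶ A),
    IsPullback π₁ π₂ g f → IsIso (IFun π₁)

/-- Objects of the concrete pullback of categories. -/
structure PBOb {A B C : Cat.{u, u}} (g : C ⟶ B) (f : A ⟶ B) : Type u where
  c : C
  a : A
  eq : g.toFunctor.obj c = f.toFunctor.obj a

namespace PBOb

variable {A B C : Cat.{u, u}} {g : C ⟶ B} {f : A ⟶ B}

lemma ext' {x y : PBOb g f} (h1 : x.c = y.c) (h2 : x.a = y.a) : x = y := by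
  cases x; cases y; cases h1; cases h2; rfl

instance : Category (PBOb g f) where
  Hom x y := {p : (x.c ⟶ y.c) × (x.a ⟶ y.a) //
    g.toFunctor.map p.1 = eqToHom x.eq ≫ f.toFunctor.map p.2 ≫ eqToHom y.eq.symm}
  id x := ⟨(𝟙 _, 𝟙 _), by simp⟩
  comp p q := ⟨(p.val.1 ≫ q.val.1, p.val.2 ≫ q.val.2), by
    simp [p.property, q.property]⟩
  id_comp p := by apply Subtype.ext; apply Prod.ext <;> simp
  comp_id p := by apply Subtype.ext; apply Prod.ext <;> simp
  assoc p q r := by apply Subtype.ext; apply Prod.ext <;> simp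

lemma hom_ext {x y : PBOb g f} {p q : x ⟶ y} (h1 : p.val.1 = q.val.1)
    (h2 : p.val.2 = q.val.2) : p = q := by
  apply Subtype.ext; exact Prod.ext h1 h2

@[simp] lemma id_val_fst (x : PBOb g f) : (𝟙 x : x ⟶ x).val.1 = 𝟙 x.c := rfl
@[simp] lemma id_val_snd (x : PBOb g f) : (𝟙 x : x ⟶ x).val.2 = 𝟙 x.a := rfl
@[simp] lemma comp_val_fst {x y z : PBOb g f} (p : x ⟶ y) (q : y ⟶ z) :
    (p ≫ q).val.1 = p.val.1 ≫ q.val.1 := rfl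
@[simp] lemma comp_val_snd {x y z : PBOb g f} (p : x ⟶ y) (q : y ⟶ z) :
    (p ≫ q).val.2 = p.val.2 ≫ q.val.2 := rfl

lemma comp3_val_fst {x x' y y' : PBOb g f} (e : x = x') (e' : y' = y) (p : x' ⟶ y') :
    (eqToHom e ≫ p ≫ eqToHom e').val.1
      = eqToHom (congrArg PBOb.c e) ≫ p.val.1 ≫ eqToHom (congrArg PBOb.c e') := by
  subst e; subst e'; simp

lemma comp3_val_snd {x x' y y' : PBOb g f} (e : x = x') (e' : y' = y) (p : x' ⟶ y') :
    (eqToHom e ≫ p ≫ eqToHom e').val.2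
      = eqToHom (congrArg PBOb.a e) ≫ p.val.2 ≫ eqToHom (congrArg PBOb.a e') := by
  subst e; subst e'; simp

@[simp] lemma eqToHom_val_fst {x y : PBOb g f} (e : x = y) :
    (eqToHom e).val.1 = eqToHom (congrArg PBOb.c e) := by subst e; rfl

@[simp] lemma eqToHom_val_snd {x y : PBOb g f} (e : x = y) :
    (eqToHom e).val.2 = eqToHom (congrArg PBOb.a e) := by subst e; rfl

end PBOb

def PBCat {A B C : Cat.{u, u}} (g : C ⟶ B) (f : A ⟶ B) : Cat.{u, u} :=
  Cat.of (PBOb g f)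

def pbFst {A B C : Cat.{u, u}} (g : C ⟶ B) (f : A ⟶ B) : PBCat g f ⟶ C where
  toFunctor := {
    obj x := x.c
    map p := p.val.1 }

def pbSnd {A B C : Cat.{u, u}} (g : C ⟶ B) (f : A ⟶ B) : PBCat g f ⟶ A where
  toFunctor := {
    obj x := x.a
    map p := p.val.2 }

lemma CatHom.ext {X Y : Cat.{u, u}} {F G : X ⟶ Y}
    (h_obj : ∀ x : ↑X, F.toFunctor.obj x = G.toFunctor.obj x)
    (h_map : ∀ (x y : ↑X) (p : x ⟶ y),
      F.toFunctor.map p = eqToHom (h_obj x) ≫ G.toFunctor.map p ≫ eqToHom (h_obj y).symm) :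
    F = G :=
  Cat.Hom.ext (CategoryTheory.Functor.ext h_obj h_map)

lemma map_comp3 {X Y : Cat.{u, u}} (F : X ⟶ Y) {x x' y y' : ↑X} (e : x = x')
    (e' : y' = y) (p : x' ⟶ y') :
    F.toFunctor.map (eqToHom e ≫ p ≫ eqToHom e')
      = eqToHom (congrArg F.toFunctor.obj e) ≫ F.toFunctor.map p ≫
        eqToHom (congrArg F.toFunctor.obj e') := by
  subst e; subst e'; simp

lemma pb_hom_ext {A B C : Cat.{u, u}} (g : C ⟶ B) (f : A ⟶ B)
    {x y : ↑(PBCat g f)} {p q : x ⟶ y}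
    (h1 : (pbFst g f).toFunctor.map p = (pbFst g f).toFunctor.map q)
    (h2 : (pbSnd g f).toFunctor.map p = (pbSnd g f).toFunctor.map q) : p = q :=
  PBOb.hom_ext h1 h2

lemma pb_comm {A B C : Cat.{u, u}} (g : C ⟶ B) (f : A ⟶ B) :
    pbFst g f ≫ g = pbSnd g f ≫ f := by
  exact CatHom.ext (fun x => x.eq) (fun x y p => by exact p.property)

open Limits in
lemma pb_isPullback {A B C : Cat.{u, u}} (g : C ⟶ B) (f : A ⟶ B) :
    IsPullback (pbFst g f) (pbSnd g f) g f := by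
  refine IsPullback.of_isLimit' ⟨pb_comm g f⟩ ?_
  refine PullbackCone.IsLimit.mk _ (fun s => ?lift) ?fl ?fr ?uniq
  case lift =>
    exact { toFunctor := {
      obj := fun x => ⟨s.fst.toFunctor.obj x, s.snd.toFunctor.obj x,
        Functor.congr_obj (congrArg Cat.Hom.toFunctor s.condition) x⟩
      map := fun {x y} h => ⟨(s.fst.toFunctor.map h, s.snd.toFunctor.map h), by
        have := Functor.congr_hom (congrArg Cat.Hom.toFunctor s.condition) h
        simpa using this⟩
      map_id := fun x => by apply PBOb.hom_ext <;> simp <;> rfl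
      map_comp := fun p q => by apply PBOb.hom_ext <;> simp <;> rfl } }
  case fl => intro s; apply CatHom.ext <;> intros <;> simp [pbFst] <;> exact (Category.id_comp _).symm
  case fr => intro s; apply CatHom.ext <;> intros <;> simp [pbSnd] <;> exact (Category.id_comp _).symm
  case uniq =>
    intro s m hm1 hm2
    apply CatHom.ext
    case h_obj =>
      intro x
      apply PBOb.ext'
      · exact Functor.congr_obj (congrArg Cat.Hom.toFunctor hm1) x
      · exact Functor.congr_obj (congrArg Cat.Hom.toFunctor hm2) x
    case h_map =>
      intro x y h
      refine pb_hom_ext g f ?_ ?_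
      · refine (Functor.congr_hom (congrArg Cat.Hom.toFunctor hm1) h).trans ?_
        symm; exact map_comp3 (pbFst g f) _ _ _
      · refine (Functor.congr_hom (congrArg Cat.Hom.toFunctor hm2) h).trans ?_
        symm; exact map_comp3 (pbSnd g f) _ _ _

-- === Part 3: auxiliary lemmas about IFun ===

lemma IFun_id (A : Cat.{u, u}) : IFun (𝟙 A) = 𝟙 (ICat A) :=
  CatHom.ext (fun _ => rfl) (fun _ _ _ => rfl)

lemma IFun_comp {A B C : Cat.{u, u}} (F : A ⟶ B) (G : B ⟶ C) :
    IFun (F ≫ G) = IFun F ≫ IFun G :=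
  CatHom.ext (fun _ => rfl) (fun _ _ _ => rfl)

lemma isIso_IFun {P Q : Cat.{u, u}} (F : P ⟶ Q) [IsIso F] : IsIso (IFun F) :=
  ⟨IFun (inv F), by rw [← IFun_comp, IsIso.hom_inv_id, IFun_id],
    by rw [← IFun_comp, IsIso.inv_hom_id, IFun_id]⟩

lemma isIso_obj_bijective {P Q : Cat.{u, u}} (F : P ⟶ Q) (h : IsIso F) :
    Function.Bijective F.toFunctor.obj := by
  obtain ⟨G, hGl, hGr⟩ := h.out
  exact Function.bijective_iff_has_inverse.2
    ⟨G.toFunctor.obj, fun x => Functor.congr_obj (congrArg Cat.Hom.toFunctor hGl) x,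
      fun y => Functor.congr_obj (congrArg Cat.Hom.toFunctor hGr) y⟩

-- === Part 4: the inverse functor for the reflection of a pullback projection ===

noncomputable def pbInv {A B C : Cat.{u, u}} (g : C ⟶ B) (f : A ⟶ B)
    (hbij : Function.Bijective f.toFunctor.obj)
    (hfull : ∀ a a' : ↑A, Function.Surjective (fun k : a ⟶ a' => f.toFunctor.map k)) :
    ICat C ⟶ ICat (PBCat g f) where
  toFunctor := {
    obj c := (show PreOb (PBCat g f) from
      ⟨c, (Equiv.ofBijective f.toFunctor.obj hbij).symm (g.toFunctor.obj c),
        ((Equiv.ofBijective f.toFunctor.obj hbij).apply_symm_apply (g.toFunctor.obj c)).symm⟩)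
    map {c c'} h := homOfLE (by
      obtain ⟨k⟩ := (leOfHom h)
      have k : @Quiver.Hom (↑C) _ c c' := k
      obtain ⟨k', hk'⟩ := hfull ((Equiv.ofBijective f.toFunctor.obj hbij).symm (g.toFunctor.obj c))
        ((Equiv.ofBijective f.toFunctor.obj hbij).symm (g.toFunctor.obj c'))
        (eqToHom ((Equiv.ofBijective f.toFunctor.obj hbij).apply_symm_apply (g.toFunctor.obj c)) ≫ g.toFunctor.map k ≫
          eqToHom ((Equiv.ofBijective f.toFunctor.obj hbij).apply_symm_apply (g.toFunctor.obj c')).symm)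
      exact ⟨⟨(k, k'), by
        have key : ∀ {X Y Z W : ↑B} (e1 : X = Y) (e2 : Y = X) (M : X ⟶ Z) (e3 : Z = W)
            (e4 : W = Z), M = eqToHom e1 ≫ (eqToHom e2 ≫ M ≫ eqToHom e3) ≫ eqToHom e4 := by
          intros _ _ _ _ e1 _ _ e3 _; cases e1; cases e3; simp
        simp only at hk'
        rw [hk']
        exact key _ _ _ _ _⟩⟩)
    map_id _ := rfl
    map_comp _ _ := rfl }

lemma isIso_IFun_pbFst {A B C : Cat.{u, u}} (g : C ⟶ B) (f : A ⟶ B)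
    (hbij : Function.Bijective f.toFunctor.obj)
    (hfull : ∀ a a' : ↑A, Function.Surjective (fun k : a ⟶ a' => f.toFunctor.map k)) :
    IsIso (IFun (pbFst g f)) := by
  refine ⟨pbInv g f hbij hfull, ?_, ?_⟩
  · refine CatHom.ext ?_ (fun _ _ _ => rfl)
    intro x
    refine PBOb.ext' rfl ?_
    exact (Equiv.ofBijective f.toFunctor.obj hbij).symm_apply_eq.2 (PBOb.eq x)
  · exact CatHom.ext (fun _ => rfl) (fun _ _ _ => rfl)

-- === Part 5: the two test categories ===

/-- The point category. -/
def OneCat : Cat.{u, u} := Cat.of (Discrete PUnit.{u + 1})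

/-- The functor from the point picking out `b`. -/
def pick {B : Cat.{u, u}} (b : ↑B) : OneCat.{u} ⟶ B where
  toFunctor := {
    obj _ := b
    map _ := 𝟙 b
    map_id _ := rfl
    map_comp _ _ := (Category.id_comp _).symm }

/-- The objects of the interval category. -/
def TwoOb : Type u := ULift (Fin 2)

instance : Preorder TwoOb.{u} := inferInstanceAs (Preorder (ULift (Fin 2)))

/-- Underlying element of `Fin 2`. -/
def TwoOb.dn (i : TwoOb.{u}) : Fin 2 := ULift.down i

def TwoOb.mk (i : Fin 2) : TwoOb.{u} := ULift.up i

/-- The interval category. -/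
def TwoCat : Cat.{u, u} := Cat.of TwoOb.{u}

/-- The functor from the interval picking out a morphism `β`. -/
def pick2 {B : Cat.{u, u}} {b b' : ↑B} (β : b ⟶ b') : TwoCat.{u} ⟶ B where
  toFunctor := {
    obj i := ComposableArrows.Mk₁.obj b b' (TwoOb.dn i)
    map {i j} h := ComposableArrows.Mk₁.map β (TwoOb.dn i) (TwoOb.dn j)
      (by exact PLift.down (ULift.down h))
    map_id i := ComposableArrows.Mk₁.map_id β (TwoOb.dn i)
    map_comp {i j k} h h' := ComposableArrows.Mk₁.map_comp β
      (by exact PLift.down (ULift.down h)) (by exact PLift.down (ULift.down h')) }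

/-- A functor `f : A ⟶ B` is stably vertical for the reflection `Cat → Preord` iff it is
bijective on objects and full. -/
theorem stablyVertical_iff {A B : Cat.{u, u}} (f : A ⟶ B) :
    StablyVertical f ↔
      (Function.Bijective f.toFunctor.obj ∧
        ∀ a a' : ↑A, Function.Surjective (fun g : a ⟶ a' => f.toFunctor.map g)) := by
  constructor
  · intro hsv
    -- object bijectivity via pullback along points
    have hbij : Function.Bijective f.toFunctor.obj := by
      constructor
      · intro a a' h
        let gb := pick (B := B) (f.toFunctor.obj a)
        have hi := hsv OneCat (PBCat gb f) gb (pbFst gb f) (pbSnd gb f) (pb_isPullback gb f)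
        have hbj := isIso_obj_bijective _ hi
        have hx : (⟨⟨⟨⟩⟩, a, rfl⟩ : PBOb gb f) = ⟨⟨⟨⟩⟩, a', h⟩ := hbj.1 rfl
        exact congrArg PBOb.a hx
      · intro b
        let gb := pick (B := B) b
        have hi := hsv OneCat (PBCat gb f) gb (pbFst gb f) (pbSnd gb f) (pb_isPullback gb f)
        have hbj := isIso_obj_bijective _ hi
        obtain ⟨x, -⟩ := hbj.2 (show ↑(ICat OneCat) from ⟨⟨⟩⟩)
        exact ⟨PBOb.a x, (PBOb.eq x).symm⟩
    refine ⟨hbij, ?_⟩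
    -- fullness via pullback along the interval
    intro a a' β
    let g2 := pick2 (B := B) β
    have hi := hsv TwoCat (PBCat g2 f) g2 (pbFst g2 f) (pbSnd g2 f) (pb_isPullback g2 f)
    obtain ⟨ψ, hl, hr⟩ := hi.out
    have hbj := isIso_obj_bijective _ hi
    have e0 : g2.toFunctor.obj (TwoOb.mk 0) = f.toFunctor.obj a := rfl
    have e1 : g2.toFunctor.obj (TwoOb.mk 1) = f.toFunctor.obj a' := rfl
    let x : PBOb g2 f := ⟨(TwoOb.mk 0), a, e0⟩
    let y : PBOb g2 f := ⟨(TwoOb.mk 1), a', e1⟩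
    have hm : ((TwoOb.mk 0) : TwoOb) ⟶ (TwoOb.mk 1) :=
      homOfLE (by change (0 : Fin 2) ≤ 1; decide)
    have hx0 : ψ.toFunctor.obj ((etaF TwoCat).toFunctor.obj (TwoOb.mk 0))
        = (show ↑(ICat (PBCat g2 f)) from x) := Functor.congr_obj (congrArg Cat.Hom.toFunctor hl) x
    have hx1 : ψ.toFunctor.obj ((etaF TwoCat).toFunctor.obj (TwoOb.mk 1))
        = (show ↑(ICat (PBCat g2 f)) from y) := Functor.congr_obj (congrArg Cat.Hom.toFunctor hl) y
    have hle := leOfHom (ψ.toFunctor.map ((etaF TwoCat).toFunctor.map hm))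
    rw [hx0, hx1] at hle
    obtain ⟨p⟩ := hle
    refine ⟨p.val.2, ?_⟩
    have hcond := p.property
    have hmap1 : g2.toFunctor.map p.val.1 = β := by
      have hsub : p.val.1 = hm := by rcases hm with ⟨⟨_⟩⟩; rfl
      rw [hsub]
      rfl
    rw [hmap1] at hcond
    simp only at hcond
    simpa using (show β = 𝟙 _ ≫ f.toFunctor.map p.val.2 ≫ 𝟙 _ from hcond).symm
  · rintro ⟨hbij, hfull⟩
    intro C P g π₁ π₂ hpb
    have h2 := pb_isPullback g f
    have he : (hpb.isoIsPullback C A h2).hom ≫ pbFst g f = π₁ :=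
      hpb.isoIsPullback_hom_fst C A h2
    rw [← he, IFun_comp]
    haveI : IsIso (IFun (hpb.isoIsPullback C A h2).hom) := isIso_IFun _
    haveI : IsIso (IFun (pbFst g f)) := isIso_IFun_pbFst g f hbij hfull
    infer_instance
end

section
/- For the reflection I : Cat → Preord, the class of stably-vertical morphisms (functors bijective on objects and full) is strictly contained in the class of vertical morphisms (functors f bijective on objects such that nonemptiness of Hom_B(fa, fa') implies nonemptiness of Hom_A(a,a')): there exists a vertical functor that is not stably vertical. Hence the monotone-light factorization system (E'_I, M*_I) differs from the reflective factorization system (E_I, M_I). -/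
open CategoryTheory
universe u

namespace SVAux
noncomputable section

/-- The walking-arrow objects. -/
def AC : Type u := ULift.{u} Bool

instance : Preorder AC.{u} := inferInstanceAs (Preorder (ULift Bool))

/-- Objects of the two-parallel-arrows category. -/
def BOb : Type u := ULift.{u} Bool

/-- Homs of the two-parallel-arrows category. -/
structure BHom (x y : BOb.{u}) : Type u where
  le : x.down ≤ y.down
  b : Bool
  hb : x = y → b = false

lemma BOb.ext' {x y : BOb.{u}} (h : x.down = y.down) : x = y := by
  cases x; cases y; cases h; rfl

lemma AC.ext' {x y : AC.{u}} (h : x.down = y.down) : x = y := by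
  cases x; cases y; cases h; rfl

lemma BHom.ext' {x y : BOb.{u}} {h h' : BHom x y} (e : h.b = h'.b) : h = h' := by
  cases h; cases h'; cases e; rfl

instance : Category.{u, u} BOb.{u} where
  Hom := BHom
  id x := ⟨le_refl _, false, fun _ => rfl⟩
  comp := fun {x y z} (h : BHom x y) (h' : BHom y z) =>
    (⟨le_trans h.le h'.le, h.b || h'.b, fun hxz => by
      have hxy : x = y := BOb.ext' (le_antisymm h.le (hxz ▸ h'.le))
      have hyz : y = z := hxy ▸ hxz
      simp [h.hb hxy, h'.hb hyz]⟩ : BHom x z)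
  id_comp h := BHom.ext' (by simp)
  comp_id h := BHom.ext' (Bool.or_false _)
  assoc h h' h'' := BHom.ext' (Bool.or_assoc _ _ _)

@[simp] lemma id_b (x : BOb.{u}) : BHom.b (𝟙 x) = false := rfl

@[simp] lemma eqToHom_b {x y : BOb.{u}} (h : x = y) : BHom.b (eqToHom h) = false := by
  subst h; exact id_b x

abbrev Acat : Cat.{u, u} := Cat.of AC.{u}
abbrev Bcat : Cat.{u, u} := Cat.of BOb.{u}
abbrev Ccat : Cat.{u, u} := Cat.of AC.{u}
abbrev Pcat : Cat.{u, u} := Cat.of (Discrete AC.{u})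

instance (X Y : ↑Pcat.{u}) : Subsingleton (X ⟶ Y) :=
  Discrete.instSubsingletonDiscreteHom X Y

/-- The inclusion picking the `false`-labelled arrow. -/
def fA : Acat.{u} ⟶ Bcat.{u} where
  toFunctor :=
  { obj x := ULift.up x.down
    map {x y} h := (⟨h.down.down, false, fun _ => rfl⟩ : BHom _ _)
    map_id _ := BHom.ext' rfl
    map_comp _ _ := BHom.ext' rfl }

/-- The functor picking the `true`-labelled arrow on non-endomorphisms. -/
def gC : Ccat.{u} ⟶ Bcat.{u} where
  toFunctor :=
  { obj x := ULift.up x.down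
    map {x y} h := (⟨h.down.down, !(decide (x.down = y.down)), fun hxy => by
      have hd : x.down = y.down := congrArg ULift.down hxy
      simp [hd]⟩ : BHom _ _)
    map_id x := BHom.ext' (by
      show (!(decide (x.down = x.down))) = false; simp)
    map_comp {x y z} h h' := BHom.ext' (by
      have h1 : x.down ≤ y.down := h.down.down
      have h2 : y.down ≤ z.down := h'.down.down
      show (!(decide (x.down = z.down)))
        = ((!(decide (x.down = y.down))) || (!(decide (y.down = z.down))))
      rcases x with ⟨a⟩; rcases y with ⟨b⟩; rcases z with ⟨c⟩
      dsimp at h1 h2 ⊢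
      cases a <;> cases b <;> cases c <;> revert h1 h2 <;> decide) }

def pi1' : Discrete AC.{u} ⥤ AC.{u} where
  obj d := ULift.up d.as.down
  map {d d'} h := homOfLE (le_of_eq (congrArg (fun (t : AC) => ULift.up t.down) h.down.down))
  map_id _ := rfl
  map_comp _ _ := rfl

def pi1 : Pcat.{u} ⟶ Ccat.{u} := pi1'.toCatHom

def pi2 : Pcat.{u} ⟶ Acat.{u} := pi1'.toCatHom

lemma commSq : pi1.{u} ≫ gC.{u} = pi2.{u} ≫ fA.{u} := by
  apply Cat.Hom.ext
  apply CategoryTheory.Functor.ext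
  case h_obj => intro d; rfl
  intro d d' h
  erw [eqToHom_refl, eqToHom_refl, Category.id_comp, Category.comp_id]
  have hd : d.as.down = d'.as.down := congrArg ULift.down h.down.down
  exact BHom.ext' (by show (!(decide (d.as.down = d'.as.down))) = false; rw [hd]; simp)

@[simp] lemma fA_b {x y : ↑Acat.{u}} (h : x ⟶ y) : BHom.b (fA.toFunctor.map h) = false := rfl

lemma obj_eq (s : Limits.PullbackCone gC.{u} fA.{u}) (d : ↑s.pt) :
    (s.fst.toFunctor.obj d).down = (s.snd.toFunctor.obj d).down := by
  have h := Functor.congr_obj (congrArg Cat.Hom.toFunctor s.condition) d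
  exact congrArg ULift.down h

lemma key (s : Limits.PullbackCone gC.{u} fA.{u}) {d d' : ↑s.pt} (m : d ⟶ d') :
    s.fst.toFunctor.obj d = s.fst.toFunctor.obj d' := by
  have hc := Functor.congr_hom (congrArg Cat.Hom.toFunctor s.condition) m
  have p : gC.toFunctor.obj (s.fst.toFunctor.obj d) = fA.toFunctor.obj (s.snd.toFunctor.obj d) := Functor.congr_obj (congrArg Cat.Hom.toFunctor s.condition) d
  have q : fA.toFunctor.obj (s.snd.toFunctor.obj d') = gC.toFunctor.obj (s.fst.toFunctor.obj d') :=
    (Functor.congr_obj (congrArg Cat.Hom.toFunctor s.condition) d').symm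
  have hb : (!(decide ((s.fst.toFunctor.obj d).down = (s.fst.toFunctor.obj d').down)))
      = (BHom.b (eqToHom p) || (BHom.b (fA.toFunctor.map (s.snd.toFunctor.map m)) || BHom.b (eqToHom q))) :=
    congrArg BHom.b hc
  erw [eqToHom_b, eqToHom_b, fA_b] at hb
  simp only [Bool.or_false, Bool.not_eq_false', decide_eq_true_eq] at hb
  exact AC.ext' hb

def liftF (s : Limits.PullbackCone gC.{u} fA.{u}) : s.pt ⟶ Pcat.{u} where
  toFunctor :=
  { obj d := Discrete.mk (s.fst.toFunctor.obj d)
    map {d d'} m := eqToHom (congrArg Discrete.mk (key s m))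
    map_id _ := rfl
    map_comp _ _ := (eqToHom_trans _ _).symm }

lemma fac1 (s : Limits.PullbackCone gC.{u} fA.{u}) : liftF s ≫ pi1.{u} = s.fst := by
  apply Cat.Hom.ext
  apply CategoryTheory.Functor.ext
  case h_obj => intro d; exact AC.ext' rfl
  intro d d' m
  rfl

lemma fac2 (s : Limits.PullbackCone gC.{u} fA.{u}) : liftF s ≫ pi2.{u} = s.snd := by
  apply Cat.Hom.ext
  apply CategoryTheory.Functor.ext
  case h_obj => intro d; exact AC.ext' (show (s.fst.toFunctor.obj d).down = _ from obj_eq s d)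
  intro d d' m
  rfl

lemma uniqF (s : Limits.PullbackCone gC.{u} fA.{u}) (m : s.pt ⟶ Pcat.{u})
    (h1 : m ≫ pi1.{u} = s.fst) (_h2 : m ≫ pi2.{u} = s.snd) : m = liftF s := by
  apply Cat.Hom.ext
  apply CategoryTheory.Functor.ext
  case h_obj =>
    intro d
    have e := Functor.congr_obj (congrArg Cat.Hom.toFunctor h1) d
    exact congrArg Discrete.mk (AC.ext' (congrArg ULift.down e))
  intro d d' k
  exact Subsingleton.elim _ _

lemma isPB : IsPullback pi1.{u} pi2.{u} gC.{u} fA.{u} :=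
  IsPullback.of_isLimit (Limits.PullbackCone.IsLimit.mk commSq liftF fac1 fac2 uniqF)

def JinvObj : PreOb Bcat.{u} → PreOb Acat.{u} :=
  fun x => ULift.up (x : ULift.{u} Bool).down

lemma JinvLe (x y : PreOb Bcat.{u}) (h : x ≤ y) : JinvObj x ≤ JinvObj y := by
  obtain ⟨k⟩ := h
  have harr := homOfLE (show (ULift.up (x : ULift.{u} Bool).down : AC.{u})
    ≤ ULift.up (y : ULift.{u} Bool).down from BHom.le k)
  exact ⟨harr⟩

/-- The inverse of `IFun fA`. -/
def Jinv : ICat Bcat.{u} ⟶ ICat Acat.{u} where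
  toFunctor :=
  { obj x := JinvObj x
    map {x y} h := homOfLE (JinvLe x y (leOfHom h))
    map_id _ := rfl
    map_comp _ _ := rfl }

lemma isIsoIFunfA : IsIso (IFun fA.{u}) := by
  refine ⟨Jinv, ?_, ?_⟩ <;>
  · apply Cat.Hom.ext
    apply CategoryTheory.Functor.ext
    case h_obj => intro x; rfl
    intro x y h
    rfl

lemma notSV : ¬ StablyVertical fA.{u} := by
  intro hsv
  have h := hsv Ccat Pcat gC pi1 pi2 isPB
  obtain ⟨G, hG1, _hG2⟩ := h.out
  set p0 : ↑(ICat Pcat.{u}) := (show PreOb Pcat.{u} from Discrete.mk (ULift.up false)) with hp0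
  set p1 : ↑(ICat Pcat.{u}) := (show PreOb Pcat.{u} from Discrete.mk (ULift.up true)) with hp1
  have e0 : G.toFunctor.obj ((IFun pi1.{u}).toFunctor.obj p0) = p0 := Functor.congr_obj (congrArg Cat.Hom.toFunctor hG1) p0
  have e1 : G.toFunctor.obj ((IFun pi1.{u}).toFunctor.obj p1) = p1 := Functor.congr_obj (congrArg Cat.Hom.toFunctor hG1) p1
  have harr := homOfLE (show (ULift.up false : AC.{u}) ≤ ULift.up true from Bool.false_le true)
  have hle : ((IFun pi1.{u}).toFunctor.obj p0) ≤ ((IFun pi1.{u}).toFunctor.obj p1) := by exact ⟨harr⟩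
  have m := G.toFunctor.map (homOfLE hle)
  have m' : p0 ⟶ p1 := eqToHom e0.symm ≫ m ≫ eqToHom e1
  have hne : (p0 : PreOb Pcat.{u}) ≤ p1 := leOfHom m'
  obtain ⟨w⟩ := hne
  have : (ULift.up false : ULift.{u} Bool) = ULift.up true := w.down.down
  exact Bool.false_ne_true (congrArg ULift.down this)

end
end SVAux

/-- The stably-vertical functors are strictly contained in the vertical functors for the
reflection `Cat → Preord`; hence the monotone-light factorization system differs from
the reflective one. -/
theorem stablyVertical_strictly_contained_in_vertical :
    (∀ (A B : Cat.{u, u}) (f : A ⟶ B), StablyVertical f → IsIso (IFun f)) ∧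
    (∃ (A B : Cat.{u, u}) (f : A ⟶ B), IsIso (IFun f) ∧ ¬ StablyVertical f) := by
  constructor
  · intro A B f hsv
    exact hsv B A (𝟙 B) f (𝟙 A) IsPullback.of_id_snd
  · exact ⟨SVAux.Acat, SVAux.Bcat, SVAux.fA, SVAux.isIsoIFunfA, SVAux.notSV⟩
end
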